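/- Let N ≥ 1, α ∈ (0, N), β > N − α, ρ > 1/2, c > 0, and let f ∈ L¹_loc(ℝ^N) with f ≥ 0 satisfy f(x) ≤ c |x|^{−β} for all |x| ≥ ρ. Then there exists a constant C = C(N, α, β, ρ, c) > 0 such that for all x with |x| ≥ 2ρ: (a) if β < N then ∫_{ℝ^N} f(y) |x − y|^{−α} dy ≤ C |x|^{N−α−β}; (b) if β = N then ∫_{ℝ^N} f(y) |x − y|^{−α} dy ≤ C |x|^{−α} log |x|; (c) if β > N then ∫_{ℝ^N} f(y) |x − y|^{−α} dy ≤ C |x|^{−α}. -/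

import Mathlib

open MeasureTheory Filter Metric Set
open scoped ENNReal

noncomputable def vr (N : ℕ) : ℝ := (volume (ball (0 : EuclideanSpace ℝ (Fin N)) 1)).toReal

lemma vr_pos (N : ℕ) : 0 < vr N := by
  rw [vr]
  exact ENNReal.toReal_pos (measure_ball_pos volume _ one_pos).ne' measure_ball_lt_top.ne

lemma vr_eq (N : ℕ) :
    volume (ball (0 : EuclideanSpace ℝ (Fin N)) 1) = ENNReal.ofReal (vr N) :=
  (ENNReal.ofReal_toReal measure_ball_lt_top.ne).symm

lemma shell_term (N : ℕ) (s u : ℝ) (hs : 0 < s) (hu : 0 < u) :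
    ∫⁻ z in closedBall (0 : EuclideanSpace ℝ (Fin N)) (2*u) \ ball 0 u,
      ENNReal.ofReal (‖z‖ ^ (-s))
      ≤ ENNReal.ofReal (u ^ (-s) * ((2*u) ^ (N:ℝ) * vr N)) := by
  have hmeas : MeasurableSet (closedBall (0 : EuclideanSpace ℝ (Fin N)) (2*u) \ ball 0 u) :=
    measurableSet_closedBall.diff measurableSet_ball
  calc ∫⁻ z in closedBall (0 : EuclideanSpace ℝ (Fin N)) (2*u) \ ball 0 u,
      ENNReal.ofReal (‖z‖ ^ (-s))
      ≤ ∫⁻ _ in closedBall (0 : EuclideanSpace ℝ (Fin N)) (2*u) \ ball 0 u,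
        ENNReal.ofReal (u ^ (-s)) := by
        refine setLIntegral_mono measurable_const (fun z hz => ?_)
        refine ENNReal.ofReal_le_ofReal ?_
        have hz' : u ≤ ‖z‖ := by
          have := hz.2
          simp only [mem_ball, dist_zero_right, not_lt] at this
          exact this
        exact Real.rpow_le_rpow_of_nonpos hu hz' (neg_nonpos.mpr hs.le)
    _ = ENNReal.ofReal (u ^ (-s)) * volume (closedBall (0 : EuclideanSpace ℝ (Fin N)) (2*u) \ ball 0 u) := by
        rw [setLIntegral_const]
    _ ≤ ENNReal.ofReal (u ^ (-s)) * volume (closedBall (0 : EuclideanSpace ℝ (Fin N)) (2*u)) := by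
        gcongr
        exact diff_subset
    _ ≤ ENNReal.ofReal (u ^ (-s) * ((2*u) ^ (N:ℝ) * vr N)) := by
        rw [Measure.addHaar_closedBall _ _ (by positivity), vr_eq N]
        rw [ENNReal.ofReal_mul (by positivity), ENNReal.ofReal_mul (by positivity)]
        gcongr
        rw [finrank_euclideanSpace_fin, ← Real.rpow_natCast (2*u) N]

lemma tsum_geo (cst q : ℝ) (hc : 0 ≤ cst) (hq0 : 0 ≤ q) (hq1 : q < 1) :
    ∑' k : ℕ, ENNReal.ofReal (cst * q ^ k) ≤ ENNReal.ofReal (cst / (1 - q)) := by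
  have h1 : ∀ k : ℕ, ENNReal.ofReal (cst * q ^ k)
      = ENNReal.ofReal cst * (ENNReal.ofReal q) ^ k := fun k => by
    rw [ENNReal.ofReal_mul hc, ENNReal.ofReal_pow hq0]
  simp only [h1]
  rw [ENNReal.tsum_mul_left, ENNReal.tsum_geometric]
  have h2 : (1 : ℝ≥0∞) - ENNReal.ofReal q = ENNReal.ofReal (1 - q) := by
    rw [ENNReal.ofReal_sub _ hq0, ENNReal.ofReal_one]
  rw [h2, ← ENNReal.ofReal_inv_of_pos (by linarith), ← ENNReal.ofReal_mul hc]
  exact le_of_eq (by rw [div_eq_mul_inv])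


lemma exists_nontrivial (N : ℕ) (hN : 1 ≤ N) : Nontrivial (EuclideanSpace ℝ (Fin N)) := by
  refine Module.nontrivial_of_finrank_pos (R := ℝ) ?_
  rw [finrank_euclideanSpace_fin]; omega

lemma shell_term' (N : ℕ) (s u : ℝ) (hs : 0 < s) (hu : 0 < u) :
    ∫⁻ z in closedBall (0 : EuclideanSpace ℝ (Fin N)) (2*u) \ ball 0 u,
      ENNReal.ofReal (‖z‖ ^ (-s))
      ≤ ENNReal.ofReal (2 ^ (N:ℝ) * vr N * u ^ ((N:ℝ) - s)) := by
  refine (shell_term N s u hs hu).trans (le_of_eq ?_)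
  congr 1
  have h1 : u ^ (-s) * u ^ (N:ℝ) = u ^ ((N:ℝ) - s) := by
    rw [← Real.rpow_add hu]; congr 1; ring
  rw [Real.mul_rpow two_pos.le hu.le, ← h1]; ring

lemma lint_ball (N : ℕ) (hN : 1 ≤ N) (s b : ℝ) (hs0 : 0 < s) (hsN : s < N) (hb : 0 < b) :
    ∫⁻ z in ball (0 : EuclideanSpace ℝ (Fin N)) b, ENNReal.ofReal (‖z‖ ^ (-s)) ≤
      ENNReal.ofReal ((2 ^ (N:ℝ) * 2 ^ (s - (N:ℝ)) * vr N / (1 - 2 ^ (s - (N:ℝ))))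
        * b ^ ((N:ℝ) - s)) := by
  haveI : Nontrivial (EuclideanSpace ℝ (Fin N)) := exists_nontrivial N hN
  set u : ℕ → ℝ := fun k => b * 2 ^ (-(k:ℝ) - 1) with hudef
  have hu : ∀ k, 0 < u k := fun k => by
    have : (0:ℝ) < 2 ^ (-(k:ℝ) - 1) := Real.rpow_pos_of_pos two_pos _
    simpa [hudef] using mul_pos hb this
  have hq1 : (2:ℝ) ^ (s - (N:ℝ)) < 1 :=
    Real.rpow_lt_one_of_one_lt_of_neg one_lt_two (by linarith)
  have hq0 : (0:ℝ) ≤ 2 ^ (s - (N:ℝ)) := (Real.rpow_pos_of_pos two_pos _).le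
  have hcover : ball (0 : EuclideanSpace ℝ (Fin N)) b ⊆
      {0} ∪ ⋃ k, (closedBall 0 (2 * u k) \ ball 0 (u k)) := by
    intro z hz
    rcases eq_or_ne z 0 with h0 | h0
    · exact Or.inl (by simp [h0])
    refine Or.inr ?_
    have hz0 : 0 < ‖z‖ := norm_pos_iff.mpr h0
    have hzb : ‖z‖ < b := by simpa [mem_ball, dist_zero_right] using hz
    have hpos : 0 < b / ‖z‖ := by positivity
    set k := ⌊Real.logb 2 (b / ‖z‖)⌋₊ with hk
    have hlogb0 : 0 ≤ Real.logb 2 (b / ‖z‖) :=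
      Real.logb_nonneg one_lt_two (by rw [le_div_iff₀ hz0]; linarith)
    refine mem_iUnion.mpr ⟨k, ?_, ?_⟩
    · -- ‖z‖ ≤ 2 * u k
      have h1 : (k:ℝ) ≤ Real.logb 2 (b / ‖z‖) := Nat.floor_le hlogb0
      have h2 : (2:ℝ) ^ (k:ℝ) ≤ b / ‖z‖ := by
        calc (2:ℝ) ^ (k:ℝ) ≤ 2 ^ (Real.logb 2 (b / ‖z‖)) :=
              Real.rpow_le_rpow_of_exponent_le one_le_two h1
          _ = b / ‖z‖ := Real.rpow_logb two_pos (by norm_num) hpos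
      have h2u : 2 * u k = b * 2 ^ (-(k:ℝ)) := by
        have he : (2:ℝ) ^ (1:ℝ) * 2 ^ (-(k:ℝ) - 1) = 2 ^ (-(k:ℝ)) := by
          rw [← Real.rpow_add two_pos]; congr 1; ring
        calc (2:ℝ) * (b * 2 ^ (-(k:ℝ) - 1)) = b * (2 ^ (1:ℝ) * 2 ^ (-(k:ℝ) - 1)) := by
              rw [Real.rpow_one]; ring
          _ = b * 2 ^ (-(k:ℝ)) := by rw [he]
      rw [mem_closedBall, dist_zero_right, h2u, Real.rpow_neg two_pos.le, ← div_eq_mul_inv,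
        le_div_iff₀ (Real.rpow_pos_of_pos two_pos _)]
      rw [le_div_iff₀ hz0] at h2
      linarith
    · -- z ∉ ball 0 (u k)
      have h1 : Real.logb 2 (b / ‖z‖) < (k:ℝ) + 1 := by
        rw [hk]; exact Nat.lt_floor_add_one _
      have h2 : b / ‖z‖ < 2 ^ ((k:ℝ) + 1) := by
        calc b / ‖z‖ = 2 ^ (Real.logb 2 (b / ‖z‖)) :=
              (Real.rpow_logb two_pos (by norm_num) hpos).symm
          _ < 2 ^ ((k:ℝ) + 1) := Real.rpow_lt_rpow_of_exponent_lt one_lt_two h1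
      simp only [mem_ball, dist_zero_right, not_lt]
      have h3 : b < ‖z‖ * 2 ^ ((k:ℝ) + 1) := by
        rw [mul_comm]; exact (div_lt_iff₀ hz0).mp h2
      show b * 2 ^ (-(k:ℝ) - 1) ≤ ‖z‖
      rw [show (-(k:ℝ) - 1) = -((k:ℝ) + 1) by ring, Real.rpow_neg two_pos.le,
        ← div_eq_mul_inv, div_le_iff₀ (Real.rpow_pos_of_pos two_pos _)]
      linarith
  calc ∫⁻ z in ball (0 : EuclideanSpace ℝ (Fin N)) b, ENNReal.ofReal (‖z‖ ^ (-s))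
      ≤ ∫⁻ z in {0} ∪ ⋃ k, (closedBall 0 (2 * u k) \ ball 0 (u k)),
        ENNReal.ofReal (‖z‖ ^ (-s)) := lintegral_mono_set hcover
    _ ≤ (∫⁻ z in ({0} : Set (EuclideanSpace ℝ (Fin N))), ENNReal.ofReal (‖z‖ ^ (-s)))
        + ∫⁻ z in ⋃ k, (closedBall 0 (2 * u k) \ ball 0 (u k)),
          ENNReal.ofReal (‖z‖ ^ (-s)) := lintegral_union_le _ _ _
    _ ≤ 0 + ∑' k : ℕ, ∫⁻ z in closedBall (0 : EuclideanSpace ℝ (Fin N)) (2 * u k) \ ball 0 (u k),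
          ENNReal.ofReal (‖z‖ ^ (-s)) := by
        gcongr
        · rw [Measure.restrict_eq_zero.mpr (measure_singleton 0), lintegral_zero_measure]
        · exact lintegral_iUnion_le _ _
    _ ≤ ∑' k : ℕ, ENNReal.ofReal ((2 ^ (N:ℝ) * 2 ^ (s - (N:ℝ)) * vr N * b ^ ((N:ℝ) - s))
          * (2 ^ (s - (N:ℝ))) ^ k) := by
        rw [zero_add]
        refine ENNReal.tsum_le_tsum (fun k => (shell_term' N s (u k) hs0 (hu k)).trans
          (le_of_eq ?_))
        congr 1
        have e1 : (u k) ^ ((N:ℝ) - s) = b ^ ((N:ℝ) - s) * 2 ^ ((-(k:ℝ) - 1) * ((N:ℝ) - s)) := by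
          rw [hudef]
          rw [Real.mul_rpow hb.le (Real.rpow_pos_of_pos two_pos _).le,
            ← Real.rpow_mul two_pos.le]
        have e2 : ((2:ℝ) ^ (s - (N:ℝ))) ^ k = 2 ^ ((s - (N:ℝ)) * (k:ℝ)) := by
          rw [← Real.rpow_natCast ((2:ℝ) ^ (s - (N:ℝ))) k, ← Real.rpow_mul two_pos.le]
        have e3 : (2:ℝ) ^ ((-(k:ℝ) - 1) * ((N:ℝ) - s))
            = 2 ^ (s - (N:ℝ)) * 2 ^ ((s - (N:ℝ)) * (k:ℝ)) := by
          rw [← Real.rpow_add two_pos]; congr 1; ring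
        rw [e1, e2, e3]; ring
    _ ≤ ENNReal.ofReal ((2 ^ (N:ℝ) * 2 ^ (s - (N:ℝ)) * vr N * b ^ ((N:ℝ) - s))
          / (1 - 2 ^ (s - (N:ℝ)))) := by
        refine tsum_geo _ _ ?_ hq0 hq1
        have := (vr_pos N).le
        positivity
    _ = ENNReal.ofReal ((2 ^ (N:ℝ) * 2 ^ (s - (N:ℝ)) * vr N / (1 - 2 ^ (s - (N:ℝ))))
          * b ^ ((N:ℝ) - s)) := by
        congr 1; ring

lemma lint_compl (N : ℕ) (hN : 1 ≤ N) (s b : ℝ) (hsN : (N:ℝ) < s) (hb : 0 < b) :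
    ∫⁻ z in (ball (0 : EuclideanSpace ℝ (Fin N)) b)ᶜ, ENNReal.ofReal (‖z‖ ^ (-s)) ≤
      ENNReal.ofReal ((2 ^ (N:ℝ) * vr N / (1 - 2 ^ ((N:ℝ) - s)))
        * b ^ ((N:ℝ) - s)) := by
  have hs0 : 0 < s := lt_of_le_of_lt (by exact_mod_cast Nat.zero_le N) hsN
  set u : ℕ → ℝ := fun k => b * 2 ^ (k:ℝ) with hudef
  have hu : ∀ k, 0 < u k := fun k =>
    mul_pos hb (Real.rpow_pos_of_pos two_pos _)
  have hq1 : (2:ℝ) ^ ((N:ℝ) - s) < 1 :=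
    Real.rpow_lt_one_of_one_lt_of_neg one_lt_two (by linarith)
  have hq0 : (0:ℝ) ≤ 2 ^ ((N:ℝ) - s) := (Real.rpow_pos_of_pos two_pos _).le
  have hcover : (ball (0 : EuclideanSpace ℝ (Fin N)) b)ᶜ ⊆
      ⋃ k, (closedBall 0 (2 * u k) \ ball 0 (u k)) := by
    intro z hz
    have hzb : b ≤ ‖z‖ := by
      simpa [mem_ball, dist_zero_right, not_lt] using hz
    have hz0 : 0 < ‖z‖ := lt_of_lt_of_le hb hzb
    have hpos : 0 < ‖z‖ / b := by positivity
    set k := ⌊Real.logb 2 (‖z‖ / b)⌋₊ with hk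
    have hlogb0 : 0 ≤ Real.logb 2 (‖z‖ / b) :=
      Real.logb_nonneg one_lt_two (by rw [le_div_iff₀ hb]; linarith)
    refine mem_iUnion.mpr ⟨k, ?_, ?_⟩
    · -- ‖z‖ ≤ 2 * u k = b * 2^(k+1)
      have h1 : Real.logb 2 (‖z‖ / b) < (k:ℝ) + 1 := by
        rw [hk]; exact Nat.lt_floor_add_one _
      have h2 : ‖z‖ / b < 2 ^ ((k:ℝ) + 1) := by
        calc ‖z‖ / b = 2 ^ (Real.logb 2 (‖z‖ / b)) :=
              (Real.rpow_logb two_pos (by norm_num) hpos).symm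
          _ < 2 ^ ((k:ℝ) + 1) := Real.rpow_lt_rpow_of_exponent_lt one_lt_two h1
      have h2u : 2 * u k = b * 2 ^ ((k:ℝ) + 1) := by
        have he : (2:ℝ) ^ (1:ℝ) * 2 ^ (k:ℝ) = 2 ^ ((k:ℝ) + 1) := by
          rw [← Real.rpow_add two_pos]; congr 1; ring
        calc (2:ℝ) * (b * 2 ^ (k:ℝ)) = b * (2 ^ (1:ℝ) * 2 ^ (k:ℝ)) := by
              rw [Real.rpow_one]; ring
          _ = b * 2 ^ ((k:ℝ) + 1) := by rw [he]
      rw [mem_closedBall, dist_zero_right, h2u]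
      rw [div_lt_iff₀ hb] at h2
      nlinarith [Real.rpow_pos_of_pos two_pos ((k:ℝ) + 1)]
    · -- u k ≤ ‖z‖
      have h1 : (k:ℝ) ≤ Real.logb 2 (‖z‖ / b) := Nat.floor_le hlogb0
      have h2 : (2:ℝ) ^ (k:ℝ) ≤ ‖z‖ / b := by
        calc (2:ℝ) ^ (k:ℝ) ≤ 2 ^ (Real.logb 2 (‖z‖ / b)) :=
              Real.rpow_le_rpow_of_exponent_le one_le_two h1
          _ = ‖z‖ / b := Real.rpow_logb two_pos (by norm_num) hpos
      simp only [mem_ball, dist_zero_right, not_lt]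
      rw [le_div_iff₀ hb] at h2
      show b * 2 ^ (k:ℝ) ≤ ‖z‖
      nlinarith
  calc ∫⁻ z in (ball (0 : EuclideanSpace ℝ (Fin N)) b)ᶜ, ENNReal.ofReal (‖z‖ ^ (-s))
      ≤ ∫⁻ z in ⋃ k, (closedBall (0 : EuclideanSpace ℝ (Fin N)) (2 * u k) \ ball 0 (u k)),
        ENNReal.ofReal (‖z‖ ^ (-s)) := lintegral_mono_set hcover
    _ ≤ ∑' k : ℕ, ∫⁻ z in closedBall (0 : EuclideanSpace ℝ (Fin N)) (2 * u k) \ ball 0 (u k),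
          ENNReal.ofReal (‖z‖ ^ (-s)) := lintegral_iUnion_le _ _
    _ ≤ ∑' k : ℕ, ENNReal.ofReal ((2 ^ (N:ℝ) * vr N * b ^ ((N:ℝ) - s))
          * (2 ^ ((N:ℝ) - s)) ^ k) := by
        refine ENNReal.tsum_le_tsum (fun k => (shell_term' N s (u k) hs0 (hu k)).trans
          (le_of_eq ?_))
        congr 1
        have e1 : (u k) ^ ((N:ℝ) - s) = b ^ ((N:ℝ) - s) * 2 ^ ((k:ℝ) * ((N:ℝ) - s)) := by
          rw [hudef]
          rw [Real.mul_rpow hb.le (Real.rpow_pos_of_pos two_pos _).le,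
            ← Real.rpow_mul two_pos.le]
        have e2 : ((2:ℝ) ^ ((N:ℝ) - s)) ^ k = 2 ^ (((N:ℝ) - s) * (k:ℝ)) := by
          rw [← Real.rpow_natCast ((2:ℝ) ^ ((N:ℝ) - s)) k, ← Real.rpow_mul two_pos.le]
        have e3 : (2:ℝ) ^ ((k:ℝ) * ((N:ℝ) - s)) = 2 ^ (((N:ℝ) - s) * (k:ℝ)) := by
          congr 1; ring
        rw [e1, e2, e3]; ring
    _ ≤ ENNReal.ofReal ((2 ^ (N:ℝ) * vr N * b ^ ((N:ℝ) - s)) / (1 - 2 ^ ((N:ℝ) - s))) := by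
        refine tsum_geo _ _ ?_ hq0 hq1
        have := (vr_pos N).le
        positivity
    _ = ENNReal.ofReal ((2 ^ (N:ℝ) * vr N / (1 - 2 ^ ((N:ℝ) - s))) * b ^ ((N:ℝ) - s)) := by
        congr 1; ring

lemma lint_annulus (N : ℕ) (hN : 1 ≤ N) (a r : ℝ) (ha : 0 < a) :
    ∫⁻ z in {z : EuclideanSpace ℝ (Fin N) | a ≤ ‖z‖} ∩ ball 0 r,
      ENNReal.ofReal (‖z‖ ^ (-(N:ℝ)))
      ≤ (⌊Real.logb 2 (r/a)⌋₊ + 1 : ℕ) * ENNReal.ofReal (2 ^ (N:ℝ) * vr N) := by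
  have hN0 : (0:ℝ) < (N:ℝ) := by exact_mod_cast hN
  set u : ℕ → ℝ := fun k => a * 2 ^ (k:ℝ) with hudef
  have hu : ∀ k, 0 < u k := fun k => mul_pos ha (Real.rpow_pos_of_pos two_pos _)
  set K := ⌊Real.logb 2 (r/a)⌋₊ + 1 with hK
  set T : ℕ → Set (EuclideanSpace ℝ (Fin N)) :=
    fun k => closedBall (0 : EuclideanSpace ℝ (Fin N)) (2 * u k) \ ball 0 (u k) with hT
  set S : Set (EuclideanSpace ℝ (Fin N)) :=
    {z : EuclideanSpace ℝ (Fin N) | a ≤ ‖z‖} ∩ ball 0 r with hS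
  have hcover : S ⊆ ⋃ k, (S ∩ T k) := by
    intro z hz
    have hzb : a ≤ ‖z‖ := hz.1
    have hz0 : 0 < ‖z‖ := lt_of_lt_of_le ha hzb
    have hpos : 0 < ‖z‖ / a := by positivity
    set k := ⌊Real.logb 2 (‖z‖ / a)⌋₊ with hk
    have hlogb0 : 0 ≤ Real.logb 2 (‖z‖ / a) :=
      Real.logb_nonneg one_lt_two (by rw [le_div_iff₀ ha]; linarith)
    refine mem_iUnion.mpr ⟨k, hz, ?_, ?_⟩
    · have h1 : Real.logb 2 (‖z‖ / a) < (k:ℝ) + 1 := by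
        rw [hk]; exact Nat.lt_floor_add_one _
      have h2 : ‖z‖ / a < 2 ^ ((k:ℝ) + 1) := by
        calc ‖z‖ / a = 2 ^ (Real.logb 2 (‖z‖ / a)) :=
              (Real.rpow_logb two_pos (by norm_num) hpos).symm
          _ < 2 ^ ((k:ℝ) + 1) := Real.rpow_lt_rpow_of_exponent_lt one_lt_two h1
      have h2u : 2 * u k = a * 2 ^ ((k:ℝ) + 1) := by
        have he : (2:ℝ) ^ (1:ℝ) * 2 ^ (k:ℝ) = 2 ^ ((k:ℝ) + 1) := by
          rw [← Real.rpow_add two_pos]; congr 1; ring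
        calc (2:ℝ) * (a * 2 ^ (k:ℝ)) = a * (2 ^ (1:ℝ) * 2 ^ (k:ℝ)) := by
              rw [Real.rpow_one]; ring
          _ = a * 2 ^ ((k:ℝ) + 1) := by rw [he]
      rw [mem_closedBall, dist_zero_right, h2u]
      rw [div_lt_iff₀ ha] at h2
      nlinarith [Real.rpow_pos_of_pos two_pos ((k:ℝ) + 1)]
    · have h1 : (k:ℝ) ≤ Real.logb 2 (‖z‖ / a) := Nat.floor_le hlogb0
      have h2 : (2:ℝ) ^ (k:ℝ) ≤ ‖z‖ / a := by
        calc (2:ℝ) ^ (k:ℝ) ≤ 2 ^ (Real.logb 2 (‖z‖ / a)) :=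
              Real.rpow_le_rpow_of_exponent_le one_le_two h1
          _ = ‖z‖ / a := Real.rpow_logb two_pos (by norm_num) hpos
      simp only [mem_ball, dist_zero_right, not_lt]
      rw [le_div_iff₀ ha] at h2
      show a * 2 ^ (k:ℝ) ≤ ‖z‖
      nlinarith
  have hempty : ∀ k, K ≤ k → S ∩ T k = ∅ := by
    intro k hKk
    rw [eq_empty_iff_forall_notMem]
    rintro z ⟨⟨hza, hzr⟩, hzT⟩
    have hz0 : 0 < ‖z‖ := lt_of_lt_of_le ha hza
    have huk : u k ≤ ‖z‖ := by
      have := hzT.2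
      simpa [mem_ball, dist_zero_right, not_lt] using this
    have hzr' : ‖z‖ < r := by simpa [mem_ball, dist_zero_right] using hzr
    have h2k : (2:ℝ) ^ (k:ℝ) < r / a := by
      rw [lt_div_iff₀ ha]
      have : a * 2 ^ (k:ℝ) ≤ ‖z‖ := huk
      nlinarith
    have hklog : (k:ℝ) < Real.logb 2 (r / a) := by
      have h0 : (0:ℝ) < r / a := lt_trans (Real.rpow_pos_of_pos two_pos _) h2k
      rw [← Real.logb_rpow (b := 2) (x := (k:ℝ)) two_pos (by norm_num : (2:ℝ) ≠ 1)]
      exact Real.logb_lt_logb one_lt_two (Real.rpow_pos_of_pos two_pos _) h2k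
    have : k ≤ ⌊Real.logb 2 (r/a)⌋₊ := Nat.le_floor hklog.le
    omega
  calc ∫⁻ z in S, ENNReal.ofReal (‖z‖ ^ (-(N:ℝ)))
      ≤ ∫⁻ z in ⋃ k, (S ∩ T k), ENNReal.ofReal (‖z‖ ^ (-(N:ℝ))) :=
        lintegral_mono_set hcover
    _ ≤ ∑' k : ℕ, ∫⁻ z in S ∩ T k, ENNReal.ofReal (‖z‖ ^ (-(N:ℝ))) :=
        lintegral_iUnion_le _ _
    _ ≤ ∑' k : ℕ, (if k < K then ENNReal.ofReal (2 ^ (N:ℝ) * vr N) else 0) := by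
        refine ENNReal.tsum_le_tsum (fun k => ?_)
        by_cases hk : k < K
        · simp only [hk, if_true]
          refine (lintegral_mono_set (inter_subset_right)).trans ?_
          have := shell_term' N (N:ℝ) (u k) hN0 (hu k)
          refine this.trans (le_of_eq ?_)
          congr 1
          rw [sub_self, Real.rpow_zero, mul_one]
        · simp only [hk, if_false]
          rw [hempty k (not_lt.mp hk), Measure.restrict_empty, lintegral_zero_measure]
    _ = ∑ k ∈ Finset.range K, (if k < K then ENNReal.ofReal (2 ^ (N:ℝ) * vr N) else 0) := by
        refine tsum_eq_sum (fun k hk => ?_)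
        simp only [Finset.mem_range, not_lt] at hk
        simp [not_lt.mpr hk]
    _ ≤ (K : ℕ) * ENNReal.ofReal (2 ^ (N:ℝ) * vr N) := by
        rw [Finset.sum_ite_of_true (fun k hk => Finset.mem_range.mp hk)]
        simp [Finset.sum_const]

noncomputable def CBa (N : ℕ) (s : ℝ) : ℝ :=
  2 ^ (N:ℝ) * 2 ^ (s - (N:ℝ)) * vr N / (1 - 2 ^ (s - (N:ℝ)))

noncomputable def CC (N : ℕ) (s : ℝ) : ℝ :=
  2 ^ (N:ℝ) * vr N / (1 - 2 ^ ((N:ℝ) - s))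

lemma CBa_pos (N : ℕ) (s : ℝ) (h : s < N) : 0 < CBa N s := by
  have h1 : (2:ℝ) ^ (s - (N:ℝ)) < 1 :=
    Real.rpow_lt_one_of_one_lt_of_neg one_lt_two (by linarith)
  have h2 := vr_pos N
  have h3 : (0:ℝ) < 2 ^ (s - (N:ℝ)) := Real.rpow_pos_of_pos two_pos _
  have h4 : (0:ℝ) < 2 ^ (N:ℝ) := Real.rpow_pos_of_pos two_pos _
  exact div_pos (by positivity) (by linarith)

lemma CC_pos (N : ℕ) (s : ℝ) (h : (N:ℝ) < s) : 0 < CC N s := by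
  have h1 : (2:ℝ) ^ ((N:ℝ) - s) < 1 :=
    Real.rpow_lt_one_of_one_lt_of_neg one_lt_two (by linarith)
  have h2 := vr_pos N
  have h4 : (0:ℝ) < 2 ^ (N:ℝ) := Real.rpow_pos_of_pos two_pos _
  exact div_pos (by positivity) (by linarith)

set_option maxHeartbeats 1000000 in
lemma master (N : ℕ) (hN : 1 ≤ N) (α β ρ c : ℝ)
    (hα0 : 0 < α) (hαN : α < N) (hβ0 : 0 < β) (hab : (N:ℝ) < α + β)
    (hρ : 1 / 2 < ρ) (hc : 0 < c)
    (f : EuclideanSpace ℝ (Fin N) → ℝ)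
    (hf : LocallyIntegrable f volume) (hf0 : ∀ x, 0 ≤ f x)
    (hdecay : ∀ x : EuclideanSpace ℝ (Fin N), ρ ≤ ‖x‖ → f x ≤ c * ‖x‖ ^ (-β))
    (x : EuclideanSpace ℝ (Fin N)) (hx : 2 * ρ ≤ ‖x‖) (J : ℝ) (hJ0 : 0 ≤ J)
    (hJ : ∫⁻ y in {y : EuclideanSpace ℝ (Fin N) | ρ ≤ ‖y‖} ∩ ball 0 (‖x‖/2),
        ENNReal.ofReal (‖y‖ ^ (-β)) ≤ ENNReal.ofReal J) :
    (∫ y : EuclideanSpace ℝ (Fin N), f y * ‖x - y‖ ^ (-α))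
      ≤ (∫ y in closedBall (0 : EuclideanSpace ℝ (Fin N)) ρ, f y) * (‖x‖/2) ^ (-α)
        + c * J * (‖x‖/2) ^ (-α)
        + (c * CBa N α + c * 3 ^ α * CC N (α + β)) * (‖x‖/2) ^ ((N:ℝ) - α - β) := by
  have hρ0 : (0:ℝ) < ρ := by linarith
  set R := ‖x‖ with hR
  have hR2 : 2 * ρ ≤ R := hx
  have hR1 : 1 < R := by linarith
  have hr0 : (0:ℝ) < R / 2 := by linarith
  have hρr : ρ ≤ R / 2 := by linarith
  set M := ∫ y in closedBall (0 : EuclideanSpace ℝ (Fin N)) ρ, f y with hM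
  have hfint : IntegrableOn f (closedBall (0 : EuclideanSpace ℝ (Fin N)) ρ) volume :=
    hf.integrableOn_isCompact (isCompact_closedBall _ _)
  have hM0 : 0 ≤ M := setIntegral_nonneg measurableSet_closedBall (fun y _ => hf0 y)
  have hCBa := CBa_pos N α hαN
  have hCC := CC_pos N (α + β) hab
  have hDD : 0 ≤ c * CBa N α + c * 3 ^ α * CC N (α + β) := by positivity
  -- measurability of the integrand
  have hker : Measurable fun y : EuclideanSpace ℝ (Fin N) => ‖x - y‖ ^ (-α) := by
    fun_prop
  have hmeas : AEStronglyMeasurable (fun y : EuclideanSpace ℝ (Fin N) => f y * ‖x - y‖ ^ (-α))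
      volume := hf.aestronglyMeasurable.mul hker.aestronglyMeasurable
  have hnn : 0 ≤ᵐ[volume] fun y : EuclideanSpace ℝ (Fin N) => f y * ‖x - y‖ ^ (-α) :=
    ae_of_all _ fun y => mul_nonneg (hf0 y) (Real.rpow_nonneg (norm_nonneg _) _)
  rw [integral_eq_lintegral_of_nonneg_ae hnn hmeas]
  refine ENNReal.toReal_le_of_le_ofReal (by positivity) ?_
  -- the four regions
  set A : Set (EuclideanSpace ℝ (Fin N)) := ball 0 ρ with hA
  set B : Set (EuclideanSpace ℝ (Fin N)) :=
    {y : EuclideanSpace ℝ (Fin N) | ρ ≤ ‖y‖} ∩ ball 0 (R/2) with hB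
  set Cs : Set (EuclideanSpace ℝ (Fin N)) := ball x (R/2) with hCs
  set D : Set (EuclideanSpace ℝ (Fin N)) := (ball (0 : EuclideanSpace ℝ (Fin N)) (R/2))ᶜ ∩ (ball x (R/2))ᶜ
    with hD
  have hBmeas : MeasurableSet B :=
    ((measurableSet_le measurable_const measurable_norm).inter measurableSet_ball)
  have hcover : (univ : Set (EuclideanSpace ℝ (Fin N))) ⊆ A ∪ (B ∪ (Cs ∪ D)) := by
    intro y _
    by_cases h1 : ‖y‖ < ρ
    · exact Or.inl (by simpa [hA, mem_ball, dist_zero_right] using h1)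
    by_cases h2 : ‖y‖ < R / 2
    · exact Or.inr (Or.inl ⟨not_lt.mp h1, by simpa [mem_ball, dist_zero_right] using h2⟩)
    by_cases h3 : ‖x - y‖ < R / 2
    · refine Or.inr (Or.inr (Or.inl ?_))
      rw [hCs, mem_ball, dist_eq_norm, ← norm_sub_rev]
      exact h3
    · refine Or.inr (Or.inr (Or.inr ⟨?_, ?_⟩))
      · simpa [mem_ball, dist_zero_right] using h2
      · rw [mem_compl_iff, mem_ball, dist_eq_norm, ← norm_sub_rev]
        exact h3
  -- piece A
  have hpieceA : ∫⁻ y in A, ENNReal.ofReal (f y * ‖x - y‖ ^ (-α))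
      ≤ ENNReal.ofReal (M * (R/2) ^ (-α)) := by
    calc ∫⁻ y in A, ENNReal.ofReal (f y * ‖x - y‖ ^ (-α))
        ≤ ∫⁻ y in A, ENNReal.ofReal ((R/2) ^ (-α)) * ENNReal.ofReal (f y) := by
          refine lintegral_mono_ae ((ae_restrict_iff' measurableSet_ball).mpr
            (ae_of_all _ fun y hy => ?_))
          have hyρ : ‖y‖ < ρ := by simpa [hA, mem_ball, dist_zero_right] using hy
          have hker2 : R / 2 ≤ ‖x - y‖ := by
            have := norm_sub_norm_le x y
            linarith
          have h5 : ‖x - y‖ ^ (-α) ≤ (R/2) ^ (-α) :=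
            Real.rpow_le_rpow_of_nonpos hr0 hker2 (neg_nonpos.mpr hα0.le)
          rw [← ENNReal.ofReal_mul (Real.rpow_nonneg hr0.le _)]
          exact ENNReal.ofReal_le_ofReal
            (by nlinarith [hf0 y, Real.rpow_nonneg (norm_nonneg (x - y)) (-α)])
      _ = ENNReal.ofReal ((R/2) ^ (-α)) * ∫⁻ y in A, ENNReal.ofReal (f y) :=
          lintegral_const_mul' _ _ ENNReal.ofReal_ne_top
      _ ≤ ENNReal.ofReal ((R/2) ^ (-α)) *
            ∫⁻ y in closedBall (0 : EuclideanSpace ℝ (Fin N)) ρ, ENNReal.ofReal (f y) := by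
          gcongr
          exact ball_subset_closedBall
      _ = ENNReal.ofReal ((R/2) ^ (-α)) * ENNReal.ofReal M := by
          rw [← ofReal_integral_eq_lintegral_ofReal hfint (ae_of_all _ fun y => hf0 y)]
      _ = ENNReal.ofReal (M * (R/2) ^ (-α)) := by
          rw [← ENNReal.ofReal_mul (Real.rpow_nonneg hr0.le _)]; congr 1; ring
  -- piece B
  have hpieceB : ∫⁻ y in B, ENNReal.ofReal (f y * ‖x - y‖ ^ (-α))
      ≤ ENNReal.ofReal (c * J * (R/2) ^ (-α)) := by
    calc ∫⁻ y in B, ENNReal.ofReal (f y * ‖x - y‖ ^ (-α))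
        ≤ ∫⁻ y in B, ENNReal.ofReal (c * (R/2) ^ (-α)) * ENNReal.ofReal (‖y‖ ^ (-β)) := by
          refine lintegral_mono_ae ((ae_restrict_iff' hBmeas).mpr
            (ae_of_all _ fun y hy => ?_))
          obtain ⟨hy1, hy2⟩ := hy
          have hy2' : ‖y‖ < R/2 := by simpa [mem_ball, dist_zero_right] using hy2
          have hker2 : R / 2 ≤ ‖x - y‖ := by
            have := norm_sub_norm_le x y
            linarith
          have h5 : ‖x - y‖ ^ (-α) ≤ (R/2) ^ (-α) :=
            Real.rpow_le_rpow_of_nonpos hr0 hker2 (neg_nonpos.mpr hα0.le)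
          have h6 : f y ≤ c * ‖y‖ ^ (-β) := hdecay y hy1
          rw [← ENNReal.ofReal_mul (by positivity)]
          refine ENNReal.ofReal_le_ofReal ?_
          have hfy := hf0 y
          have hb1 : (0:ℝ) ≤ ‖y‖ ^ (-β) := Real.rpow_nonneg (norm_nonneg _) _
          have hb2 : (0:ℝ) ≤ ‖x - y‖ ^ (-α) := Real.rpow_nonneg (norm_nonneg _) _
          calc f y * ‖x - y‖ ^ (-α) ≤ (c * ‖y‖ ^ (-β)) * ((R/2) ^ (-α)) := by
                exact mul_le_mul h6 h5 hb2 (by positivity)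
            _ = c * (R/2) ^ (-α) * ‖y‖ ^ (-β) := by ring
      _ = ENNReal.ofReal (c * (R/2) ^ (-α)) * ∫⁻ y in B, ENNReal.ofReal (‖y‖ ^ (-β)) :=
          lintegral_const_mul' _ _ ENNReal.ofReal_ne_top
      _ ≤ ENNReal.ofReal (c * (R/2) ^ (-α)) * ENNReal.ofReal J := by gcongr
      _ = ENNReal.ofReal (c * J * (R/2) ^ (-α)) := by
          rw [← ENNReal.ofReal_mul (by positivity)]; congr 1; ring
  -- piece C
  have htrans : ∫⁻ y in Cs, ENNReal.ofReal (‖x - y‖ ^ (-α))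
      = ∫⁻ z in ball (0 : EuclideanSpace ℝ (Fin N)) (R/2), ENNReal.ofReal (‖z‖ ^ (-α)) := by
    have mp : MeasurePreserving (fun y : EuclideanSpace ℝ (Fin N) => x - y) volume volume :=
      ⟨measurable_const.sub measurable_id, Measure.map_sub_left_eq_self volume x⟩
    have him : (fun y : EuclideanSpace ℝ (Fin N) => x - y) '' Cs
        = ball (0 : EuclideanSpace ℝ (Fin N)) (R/2) := by
      ext z
      constructor
      · rintro ⟨y, hy, rfl⟩
        rw [mem_ball, dist_zero_right]
        rw [show (Cs : Set (EuclideanSpace ℝ (Fin N))) = ball x (R/2) from hCs,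
          mem_ball, dist_eq_norm, ← norm_sub_rev] at hy
        exact hy
      · intro hz
        rw [mem_ball, dist_zero_right] at hz
        refine ⟨x - z, ?_, sub_sub_cancel x z⟩
        rw [show (Cs : Set (EuclideanSpace ℝ (Fin N))) = ball x (R/2) from hCs,
          mem_ball, dist_eq_norm]
        simpa [norm_sub_rev] using (by simpa using hz : ‖z‖ < R/2)
    rw [← him, ← mp.setLIntegral_comp_emb (MeasurableEquiv.subLeft x).measurableEmbedding
      (fun z => ENNReal.ofReal (‖z‖ ^ (-α))) Cs]
  have hpieceC : ∫⁻ y in Cs, ENNReal.ofReal (f y * ‖x - y‖ ^ (-α))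
      ≤ ENNReal.ofReal (c * CBa N α * (R/2) ^ ((N:ℝ) - α - β)) := by
    calc ∫⁻ y in Cs, ENNReal.ofReal (f y * ‖x - y‖ ^ (-α))
        ≤ ∫⁻ y in Cs, ENNReal.ofReal (c * (R/2) ^ (-β)) * ENNReal.ofReal (‖x - y‖ ^ (-α)) := by
          refine lintegral_mono_ae ((ae_restrict_iff' measurableSet_ball).mpr
            (ae_of_all _ fun y hy => ?_))
          have hy' : ‖x - y‖ < R/2 := by
            rw [mem_ball, dist_eq_norm, ← norm_sub_rev] at hy
            exact hy
          have hyn : R/2 ≤ ‖y‖ := by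
            have := norm_sub_norm_le x (x - y)
            have hxy : x - (x - y) = y := by abel
            rw [hxy] at this
            linarith
          have h6 : f y ≤ c * ‖y‖ ^ (-β) := hdecay y (le_trans hρr hyn)
          have h7 : ‖y‖ ^ (-β) ≤ (R/2) ^ (-β) :=
            Real.rpow_le_rpow_of_nonpos hr0 hyn (neg_nonpos.mpr hβ0.le)
          rw [← ENNReal.ofReal_mul (by positivity)]
          refine ENNReal.ofReal_le_ofReal ?_
          have hb2 : (0:ℝ) ≤ ‖x - y‖ ^ (-α) := Real.rpow_nonneg (norm_nonneg _) _
          refine mul_le_mul_of_nonneg_right ?_ hb2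
          calc f y ≤ c * ‖y‖ ^ (-β) := h6
            _ ≤ c * (R/2) ^ (-β) := by nlinarith
      _ = ENNReal.ofReal (c * (R/2) ^ (-β)) * ∫⁻ y in Cs, ENNReal.ofReal (‖x - y‖ ^ (-α)) :=
          lintegral_const_mul' _ _ ENNReal.ofReal_ne_top
      _ ≤ ENNReal.ofReal (c * (R/2) ^ (-β))
            * ENNReal.ofReal (CBa N α * (R/2) ^ ((N:ℝ) - α)) := by
          rw [htrans]
          gcongr
          exact lint_ball N hN α (R/2) hα0 hαN hr0
      _ ≤ ENNReal.ofReal (c * CBa N α * (R/2) ^ ((N:ℝ) - α - β)) := by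
          rw [← ENNReal.ofReal_mul (by positivity)]
          refine ENNReal.ofReal_le_ofReal (le_of_eq ?_)
          have he : (R/2) ^ (-β) * (R/2) ^ ((N:ℝ) - α) = (R/2) ^ ((N:ℝ) - α - β) := by
            rw [← Real.rpow_add hr0]; congr 1; ring
          calc c * (R/2) ^ (-β) * (CBa N α * (R/2) ^ ((N:ℝ) - α))
              = c * CBa N α * ((R/2) ^ (-β) * (R/2) ^ ((N:ℝ) - α)) := by ring
            _ = c * CBa N α * (R/2) ^ ((N:ℝ) - α - β) := by rw [he]
  -- piece D
  have hpieceD : ∫⁻ y in D, ENNReal.ofReal (f y * ‖x - y‖ ^ (-α))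
      ≤ ENNReal.ofReal (c * 3 ^ α * CC N (α + β) * (R/2) ^ ((N:ℝ) - α - β)) := by
    have hDsub : D ⊆ (ball (0 : EuclideanSpace ℝ (Fin N)) (R/2))ᶜ := inter_subset_left
    have hDmeas : MeasurableSet D := measurableSet_ball.compl.inter measurableSet_ball.compl
    calc ∫⁻ y in D, ENNReal.ofReal (f y * ‖x - y‖ ^ (-α))
        ≤ ∫⁻ y in D, ENNReal.ofReal (c * 3 ^ α) * ENNReal.ofReal (‖y‖ ^ (-(α + β))) := by
          refine lintegral_mono_ae ((ae_restrict_iff' hDmeas).mpr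
            (ae_of_all _ fun y hy => ?_))
          obtain ⟨hy1, hy2⟩ := hy
          have hy1' : R/2 ≤ ‖y‖ := by
            simpa [mem_ball, dist_zero_right, not_lt] using hy1
          have hy2' : R/2 ≤ ‖x - y‖ := by
            have : ¬ dist y x < R/2 := by simpa [mem_ball] using hy2
            rw [dist_eq_norm, ← norm_sub_rev] at this
            linarith [not_lt.mp this]
          have hy0 : 0 < ‖y‖ := lt_of_lt_of_le hr0 hy1'
          have h3 : ‖y‖ / 3 ≤ ‖x - y‖ := by
            by_cases hcase : ‖y‖ ≤ 3/2 * R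
            · linarith
            · have h8 : ‖y‖ - ‖x‖ ≤ ‖y - x‖ := norm_sub_norm_le y x
              rw [norm_sub_rev] at h8
              have : R ≤ 2/3 * ‖y‖ := by linarith
              linarith
          have hker3 : ‖x - y‖ ^ (-α) ≤ 3 ^ α * ‖y‖ ^ (-α) := by
            have h9 : (‖y‖ / 3) ^ (-α) = 3 ^ α * ‖y‖ ^ (-α) := by
              rw [Real.div_rpow (norm_nonneg _) (by norm_num : (0:ℝ) ≤ 3),
                Real.rpow_neg (by norm_num : (0:ℝ) ≤ 3), div_eq_mul_inv, inv_inv]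
              ring
            rw [← h9]
            exact Real.rpow_le_rpow_of_nonpos (by positivity) h3 (neg_nonpos.mpr hα0.le)
          have h6 : f y ≤ c * ‖y‖ ^ (-β) := hdecay y (le_trans hρr hy1')
          have h10 : ‖y‖ ^ (-β) * ‖y‖ ^ (-α) = ‖y‖ ^ (-(α + β)) := by
            rw [← Real.rpow_add hy0]; congr 1; ring
          rw [← ENNReal.ofReal_mul (by positivity)]
          refine ENNReal.ofReal_le_ofReal ?_
          have hb1 : (0:ℝ) ≤ ‖y‖ ^ (-β) := Real.rpow_nonneg (norm_nonneg _) _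
          have hb2 : (0:ℝ) ≤ ‖x - y‖ ^ (-α) := Real.rpow_nonneg (norm_nonneg _) _
          have hb3 : (0:ℝ) ≤ 3 ^ α * ‖y‖ ^ (-α) := by positivity
          calc f y * ‖x - y‖ ^ (-α) ≤ (c * ‖y‖ ^ (-β)) * (3 ^ α * ‖y‖ ^ (-α)) :=
                mul_le_mul h6 hker3 hb2 (by positivity)
            _ = c * 3 ^ α * (‖y‖ ^ (-β) * ‖y‖ ^ (-α)) := by ring
            _ = c * 3 ^ α * ‖y‖ ^ (-(α + β)) := by rw [h10]
      _ = ENNReal.ofReal (c * 3 ^ α) * ∫⁻ y in D, ENNReal.ofReal (‖y‖ ^ (-(α + β))) :=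
          lintegral_const_mul' _ _ ENNReal.ofReal_ne_top
      _ ≤ ENNReal.ofReal (c * 3 ^ α)
            * ENNReal.ofReal (CC N (α + β) * (R/2) ^ ((N:ℝ) - (α + β))) := by
          gcongr
          calc ∫⁻ y in D, ENNReal.ofReal (‖y‖ ^ (-(α + β)))
              ≤ ∫⁻ y in (ball (0 : EuclideanSpace ℝ (Fin N)) (R/2))ᶜ,
                  ENNReal.ofReal (‖y‖ ^ (-(α + β))) := lintegral_mono_set hDsub
            _ ≤ ENNReal.ofReal ((2 ^ (N:ℝ) * vr N / (1 - 2 ^ ((N:ℝ) - (α + β))))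
                  * (R/2) ^ ((N:ℝ) - (α + β))) := lint_compl N hN (α + β) (R/2) hab hr0
            _ = ENNReal.ofReal (CC N (α + β) * (R/2) ^ ((N:ℝ) - (α + β))) := rfl
      _ ≤ ENNReal.ofReal (c * 3 ^ α * CC N (α + β) * (R/2) ^ ((N:ℝ) - α - β)) := by
          rw [← ENNReal.ofReal_mul (by positivity)]
          refine ENNReal.ofReal_le_ofReal (le_of_eq ?_)
          rw [show (N:ℝ) - (α + β) = (N:ℝ) - α - β by ring]
          ring
  -- combine
  calc ∫⁻ y, ENNReal.ofReal (f y * ‖x - y‖ ^ (-α))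
      = ∫⁻ y in (univ : Set (EuclideanSpace ℝ (Fin N))), ENNReal.ofReal (f y * ‖x - y‖ ^ (-α)) := by
        rw [Measure.restrict_univ]
    _ ≤ ∫⁻ y in A ∪ (B ∪ (Cs ∪ D)), ENNReal.ofReal (f y * ‖x - y‖ ^ (-α)) :=
        lintegral_mono_set hcover
    _ ≤ (∫⁻ y in A, ENNReal.ofReal (f y * ‖x - y‖ ^ (-α)))
        + ((∫⁻ y in B, ENNReal.ofReal (f y * ‖x - y‖ ^ (-α)))
          + ((∫⁻ y in Cs, ENNReal.ofReal (f y * ‖x - y‖ ^ (-α)))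
            + ∫⁻ y in D, ENNReal.ofReal (f y * ‖x - y‖ ^ (-α)))) :=
        (lintegral_union_le _ _ _).trans (add_le_add (le_refl _) ((lintegral_union_le _ _ _).trans
          (add_le_add (le_refl _) (lintegral_union_le _ _ _))))
    _ ≤ ENNReal.ofReal (M * (R/2) ^ (-α)) + (ENNReal.ofReal (c * J * (R/2) ^ (-α))
        + (ENNReal.ofReal (c * CBa N α * (R/2) ^ ((N:ℝ) - α - β))
          + ENNReal.ofReal (c * 3 ^ α * CC N (α + β) * (R/2) ^ ((N:ℝ) - α - β)))) := by
        exact add_le_add hpieceA (add_le_add hpieceB (add_le_add hpieceC hpieceD))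
    _ = ENNReal.ofReal (M * (R/2) ^ (-α) + c * J * (R/2) ^ (-α)
        + (c * CBa N α + c * 3 ^ α * CC N (α + β)) * (R/2) ^ ((N:ℝ) - α - β)) := by
        rw [← ENNReal.ofReal_add (by positivity) (by positivity),
          ← ENNReal.ofReal_add (by positivity) (by positivity),
          ← ENNReal.ofReal_add (by positivity) (by positivity)]
        congr 1
        ring

set_option maxHeartbeats 1600000 in
theorem stmt_12 (N : ℕ) (hN : 1 ≤ N) (α β ρ c : ℝ)
    (hα0 : 0 < α) (hαN : α < N) (hβ : (N : ℝ) - α < β) (hρ : 1 / 2 < ρ) (hc : 0 < c)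
    (f : EuclideanSpace ℝ (Fin N) → ℝ)
    (hf : LocallyIntegrable f volume) (hf0 : ∀ x, 0 ≤ f x)
    (hdecay : ∀ x : EuclideanSpace ℝ (Fin N), ρ ≤ ‖x‖ → f x ≤ c * ‖x‖ ^ (-β)) :
    ∃ C : ℝ, 0 < C ∧ ∀ x : EuclideanSpace ℝ (Fin N), 2 * ρ ≤ ‖x‖ →
      (β < N → (∫ y : EuclideanSpace ℝ (Fin N), f y * ‖x - y‖ ^ (-α))
          ≤ C * ‖x‖ ^ ((N : ℝ) - α - β)) ∧
      (β = N → (∫ y : EuclideanSpace ℝ (Fin N), f y * ‖x - y‖ ^ (-α))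
          ≤ C * ‖x‖ ^ (-α) * Real.log ‖x‖) ∧
      ((N : ℝ) < β → (∫ y : EuclideanSpace ℝ (Fin N), f y * ‖x - y‖ ^ (-α))
          ≤ C * ‖x‖ ^ (-α)) := by
  have hρ0 : (0:ℝ) < ρ := by linarith
  have hNα : (0:ℝ) < (N:ℝ) - α := by linarith
  have hβ0 : 0 < β := by linarith
  have hab : (N:ℝ) < α + β := by linarith
  have hvr := vr_pos N
  have hlog2 : 0 < Real.log 2 := Real.log_pos one_lt_two
  have hlog2ρ : 0 < Real.log (2*ρ) := Real.log_pos (by linarith)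
  set γ : ℝ := ((N:ℝ) + β)/2 with hγdef
  set M : ℝ := ∫ y in closedBall (0 : EuclideanSpace ℝ (Fin N)) ρ, f y with hMdef
  have hM0 : 0 ≤ M := setIntegral_nonneg measurableSet_closedBall (fun y _ => hf0 y)
  set DD : ℝ := c * CBa N α + c * 3 ^ α * CC N (α + β) with hDDdef
  have hDD0 : 0 ≤ DD := by
    have h1 := CBa_pos N α hαN
    have h2 := CC_pos N (α + β) hab
    positivity
  set c₂ : ℝ := 1/Real.log 2 + 1/Real.log (2*ρ) with hc₂def
  have hc₂0 : 0 < c₂ := by positivity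
  set T1 : ℝ := M*2^α + (c * CBa N γ + DD) * 2^(α+β-(N:ℝ)) with hT1def
  set T2 : ℝ := (M*2^α + DD*2^α)*(1/Real.log (2*ρ)) + c*2^α*(2^(N:ℝ)*vr N)*c₂ with hT2def
  set T3 : ℝ := M*2^α + c*(CC N β * ρ^((N:ℝ)-β))*2^α + DD*2^(α+β-(N:ℝ)) with hT3def
  refine ⟨1 + |T1| + |T2| + |T3|, by positivity, fun x hx => ?_⟩
  set R : ℝ := ‖x‖ with hRdef
  have hR2 : 2 * ρ ≤ R := hx
  have hR1 : 1 < R := by linarith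
  have hR0 : (0:ℝ) < R := by linarith
  have hr0 : (0:ℝ) < R/2 := by linarith
  have hρr : ρ ≤ R/2 := by linarith
  have hhalf : ∀ t : ℝ, (R/2)^t = R^t * 2^(-t) := by
    intro t
    rw [div_eq_mul_inv, Real.mul_rpow hR0.le (inv_nonneg.mpr two_pos.le),
      Real.inv_rpow two_pos.le, ← Real.rpow_neg two_pos.le]
  have hQ : (R/2)^(-α) = R^(-α) * 2^α := by
    rw [hhalf, neg_neg]
  have hP : (R/2)^((N:ℝ)-α-β) = R^((N:ℝ)-α-β) * 2^(α+β-(N:ℝ)) := by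
    rw [hhalf]
    congr 1
    congr 1
    ring
  set CCC : ℝ := 1 + |T1| + |T2| + |T3| with hCCC
  have hT1C : T1 ≤ CCC := by
    have := le_abs_self T1
    have := abs_nonneg T2
    have := abs_nonneg T3
    linarith
  have hT2C : T2 ≤ CCC := by
    have := le_abs_self T2
    have := abs_nonneg T1
    have := abs_nonneg T3
    linarith
  have hT3C : T3 ≤ CCC := by
    have := le_abs_self T3
    have := abs_nonneg T1
    have := abs_nonneg T2
    linarith
  have hBmeas : MeasurableSet ({y : EuclideanSpace ℝ (Fin N) | ρ ≤ ‖y‖} ∩ ball 0 (R/2)) :=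
    ((measurableSet_le measurable_const measurable_norm).inter measurableSet_ball)
  refine ⟨?_, ?_, ?_⟩
  · -- case β < N
    intro hβN
    have hγβ : β < γ := by rw [hγdef]; linarith
    have hγN : γ < N := by rw [hγdef]; linarith
    have hγ0 : 0 < γ := by linarith
    have hCBγ := CBa_pos N γ hγN
    set J : ℝ := CBa N γ * (R/2)^((N:ℝ)-β) with hJdef
    have hJ0 : 0 ≤ J := by positivity
    have hJ : ∫⁻ y in {y : EuclideanSpace ℝ (Fin N) | ρ ≤ ‖y‖} ∩ ball 0 (R/2),
        ENNReal.ofReal (‖y‖ ^ (-β)) ≤ ENNReal.ofReal J := by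
      calc ∫⁻ y in {y : EuclideanSpace ℝ (Fin N) | ρ ≤ ‖y‖} ∩ ball 0 (R/2),
          ENNReal.ofReal (‖y‖ ^ (-β))
          ≤ ∫⁻ y in {y : EuclideanSpace ℝ (Fin N) | ρ ≤ ‖y‖} ∩ ball 0 (R/2),
            ENNReal.ofReal ((R/2)^(γ-β)) * ENNReal.ofReal (‖y‖ ^ (-γ)) := by
            refine lintegral_mono_ae ((ae_restrict_iff' hBmeas).mpr
              (ae_of_all _ fun y hy => ?_))
            obtain ⟨hy1, hy2⟩ := hy
            have hy0 : 0 < ‖y‖ := lt_of_lt_of_le hρ0 hy1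
            have hy2' : ‖y‖ ≤ R/2 := by
              have : ‖y‖ < R/2 := by simpa [mem_ball, dist_zero_right] using hy2
              linarith
            rw [← ENNReal.ofReal_mul (Real.rpow_nonneg hr0.le _)]
            refine ENNReal.ofReal_le_ofReal ?_
            have he : ‖y‖ ^ (-β) = ‖y‖^(γ-β) * ‖y‖^(-γ) := by
              rw [← Real.rpow_add hy0]; congr 1; ring
            rw [he]
            refine mul_le_mul_of_nonneg_right ?_ (Real.rpow_nonneg (norm_nonneg _) _)
            exact Real.rpow_le_rpow (norm_nonneg _) hy2' (by linarith)
        _ = ENNReal.ofReal ((R/2)^(γ-β)) *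
              ∫⁻ y in {y : EuclideanSpace ℝ (Fin N) | ρ ≤ ‖y‖} ∩ ball 0 (R/2),
                ENNReal.ofReal (‖y‖ ^ (-γ)) :=
            lintegral_const_mul' _ _ ENNReal.ofReal_ne_top
        _ ≤ ENNReal.ofReal ((R/2)^(γ-β)) *
              ∫⁻ y in ball (0 : EuclideanSpace ℝ (Fin N)) (R/2),
                ENNReal.ofReal (‖y‖ ^ (-γ)) := by
            gcongr
            exact inter_subset_right
        _ ≤ ENNReal.ofReal ((R/2)^(γ-β)) *
              ENNReal.ofReal ((2 ^ (N:ℝ) * 2 ^ (γ - (N:ℝ)) * vr N / (1 - 2 ^ (γ - (N:ℝ))))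
                * (R/2) ^ ((N:ℝ) - γ)) := by
            gcongr
            exact lint_ball N hN γ (R/2) hγ0 hγN hr0
        _ = ENNReal.ofReal J := by
            rw [← ENNReal.ofReal_mul (Real.rpow_nonneg hr0.le _)]
            congr 1
            have he : (R/2)^(γ-β) * (R/2)^((N:ℝ)-γ) = (R/2)^((N:ℝ)-β) := by
              rw [← Real.rpow_add hr0]; congr 1; ring
            calc (R/2)^(γ-β) * ((2 ^ (N:ℝ) * 2 ^ (γ - (N:ℝ)) * vr N / (1 - 2 ^ (γ - (N:ℝ))))
                  * (R/2) ^ ((N:ℝ) - γ))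
                = (2 ^ (N:ℝ) * 2 ^ (γ - (N:ℝ)) * vr N / (1 - 2 ^ (γ - (N:ℝ))))
                  * ((R/2)^(γ-β) * (R/2) ^ ((N:ℝ) - γ)) := by ring
              _ = J := by rw [he, hJdef]; rfl
    have key := master N hN α β ρ c hα0 hαN hβ0 hab hρ hc f hf hf0 hdecay x hx J hJ0 hJ
    refine key.trans ?_
    have hJQ : c * J * (R/2)^(-α) = c * CBa N γ * (R/2)^((N:ℝ)-α-β) := by
      have he : (R/2)^((N:ℝ)-β) * (R/2)^(-α) = (R/2)^((N:ℝ)-α-β) := by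
        rw [← Real.rpow_add hr0]; congr 1; ring
      calc c * J * (R/2)^(-α) = c * CBa N γ * ((R/2)^((N:ℝ)-β) * (R/2)^(-α)) := by
            rw [hJdef]; ring
        _ = c * CBa N γ * (R/2)^((N:ℝ)-α-β) := by rw [he]
    rw [hJQ, hQ, hP]
    have hmono : R^(-α) ≤ R^((N:ℝ)-α-β) :=
      Real.rpow_le_rpow_of_exponent_le hR1.le (by linarith)
    have hpow0 : (0:ℝ) ≤ R^((N:ℝ)-α-β) := Real.rpow_nonneg hR0.le _
    have h2α : (0:ℝ) < 2^α := Real.rpow_pos_of_pos two_pos _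
    have h2q : (0:ℝ) < 2^(α+β-(N:ℝ)) := Real.rpow_pos_of_pos two_pos _
    calc M * (R^(-α) * 2^α) + c * CBa N γ * (R^((N:ℝ)-α-β) * 2^(α+β-(N:ℝ)))
          + DD * (R^((N:ℝ)-α-β) * 2^(α+β-(N:ℝ)))
        ≤ M * (R^((N:ℝ)-α-β) * 2^α) + c * CBa N γ * (R^((N:ℝ)-α-β) * 2^(α+β-(N:ℝ)))
          + DD * (R^((N:ℝ)-α-β) * 2^(α+β-(N:ℝ))) := by
          have := mul_le_mul_of_nonneg_left hmono (mul_nonneg hM0 h2α.le)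
          nlinarith
      _ = T1 * R^((N:ℝ)-α-β) := by rw [hT1def]; ring
      _ ≤ CCC * R^((N:ℝ)-α-β) := mul_le_mul_of_nonneg_right hT1C hpow0
  · -- case β = N
    intro hβN
    set K : ℕ := ⌊Real.logb 2 ((R/2)/ρ)⌋₊ + 1 with hKdef
    set J : ℝ := (K:ℝ) * (2^(N:ℝ) * vr N) with hJdef
    have hJ0 : 0 ≤ J := by positivity
    have hJ : ∫⁻ y in {y : EuclideanSpace ℝ (Fin N) | ρ ≤ ‖y‖} ∩ ball 0 (R/2),
        ENNReal.ofReal (‖y‖ ^ (-β)) ≤ ENNReal.ofReal J := by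
      rw [hβN]
      calc ∫⁻ y in {y : EuclideanSpace ℝ (Fin N) | ρ ≤ ‖y‖} ∩ ball 0 (R/2),
          ENNReal.ofReal (‖y‖ ^ (-(N:ℝ)))
          ≤ (K:ℕ) * ENNReal.ofReal (2 ^ (N:ℝ) * vr N) := lint_annulus N hN ρ (R/2) hρ0
        _ = ENNReal.ofReal J := by
            rw [hJdef, ← ENNReal.ofReal_natCast K, ← ENNReal.ofReal_mul (Nat.cast_nonneg K)]
    have hlogR : Real.log (2*ρ) ≤ Real.log R :=
      Real.log_le_log (by positivity) hR2
    have hlogR0 : 0 < Real.log R := lt_of_lt_of_le hlog2ρ hlogR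
    have hK : (K:ℝ) ≤ c₂ * Real.log R := by
      have ht0 : (1:ℝ) ≤ (R/2)/ρ := by
        rw [le_div_iff₀ hρ0]; linarith
      have htnn : 0 ≤ Real.logb 2 ((R/2)/ρ) := Real.logb_nonneg one_lt_two ht0
      have hfl : (⌊Real.logb 2 ((R/2)/ρ)⌋₊ : ℝ) ≤ Real.logb 2 ((R/2)/ρ) := Nat.floor_le htnn
      have hKle : (K:ℝ) ≤ Real.logb 2 ((R/2)/ρ) + 1 := by
        rw [hKdef]; push_cast; linarith
      have hdiv : (R/2)/ρ = R/(2*ρ) := by ring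
      have hlb : Real.logb 2 ((R/2)/ρ) = (Real.log R - Real.log (2*ρ))/Real.log 2 := by
        rw [hdiv, Real.logb, Real.log_div hR0.ne' (by positivity)]
      have h1 : (Real.log R - Real.log (2*ρ))/Real.log 2 ≤ Real.log R/Real.log 2 := by
        gcongr
        linarith
      have h2 : (1:ℝ) ≤ Real.log R/Real.log (2*ρ) := by
        rw [le_div_iff₀ hlog2ρ]; linarith
      have h3 : c₂ * Real.log R = Real.log R/Real.log 2 + Real.log R/Real.log (2*ρ) := by
        rw [hc₂def]; ring
      rw [h3]
      rw [hlb] at hKle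
      linarith
    have key := master N hN α β ρ c hα0 hαN hβ0 hab hρ hc f hf hf0 hdecay x hx J hJ0 hJ
    refine key.trans ?_
    have hE : (N:ℝ) - α - β = -α := by rw [hβN]; ring
    rw [hE, hQ]
    have h2α : (0:ℝ) < 2^α := Real.rpow_pos_of_pos two_pos _
    have hRα : (0:ℝ) ≤ R^(-α) := Real.rpow_nonneg hR0.le _
    have hone : (1:ℝ) ≤ (1/Real.log (2*ρ)) * Real.log R := by
      rw [one_div, inv_mul_eq_div, le_div_iff₀ hlog2ρ]; linarith
    have hA1 : (M + DD) * (R^(-α) * 2^α)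
        ≤ (M*2^α + DD*2^α)*(1/Real.log (2*ρ)) * (R^(-α) * Real.log R) := by
      calc (M + DD) * (R^(-α) * 2^α) = ((M + DD) * (R^(-α) * 2^α)) * 1 := by ring
        _ ≤ ((M + DD) * (R^(-α) * 2^α)) * ((1/Real.log (2*ρ)) * Real.log R) := by
            refine mul_le_mul_of_nonneg_left hone ?_
            positivity
        _ = (M*2^α + DD*2^α)*(1/Real.log (2*ρ)) * (R^(-α) * Real.log R) := by ring
    have hA2 : c * J * (R^(-α) * 2^α)
        ≤ c*2^α*(2^(N:ℝ)*vr N)*c₂ * (R^(-α) * Real.log R) := by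
      calc c * J * (R^(-α) * 2^α)
          = (c * (2^(N:ℝ) * vr N) * (R^(-α) * 2^α)) * (K:ℝ) := by rw [hJdef]; ring
        _ ≤ (c * (2^(N:ℝ) * vr N) * (R^(-α) * 2^α)) * (c₂ * Real.log R) := by
            refine mul_le_mul_of_nonneg_left hK ?_
            positivity
        _ = c*2^α*(2^(N:ℝ)*vr N)*c₂ * (R^(-α) * Real.log R) := by ring
    have hfin : T2 * (R^(-α) * Real.log R) ≤ CCC * (R^(-α) * Real.log R) := by
      refine mul_le_mul_of_nonneg_right hT2C ?_
      positivity
    calc M * (R^(-α) * 2^α) + c * J * (R^(-α) * 2^α) + DD * (R^(-α) * 2^α)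
        = (M + DD) * (R^(-α) * 2^α) + c * J * (R^(-α) * 2^α) := by ring
      _ ≤ (M*2^α + DD*2^α)*(1/Real.log (2*ρ)) * (R^(-α) * Real.log R)
            + c*2^α*(2^(N:ℝ)*vr N)*c₂ * (R^(-α) * Real.log R) := add_le_add hA1 hA2
      _ = T2 * (R^(-α) * Real.log R) := by rw [hT2def]; ring
      _ ≤ CCC * (R^(-α) * Real.log R) := hfin
      _ = CCC * R^(-α) * Real.log R := by ring
  · -- case β > N
    intro hβN
    have hCCβ := CC_pos N β hβN
    set J : ℝ := CC N β * ρ^((N:ℝ)-β) with hJdef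
    have hJ0 : 0 ≤ J := by positivity
    have hJ : ∫⁻ y in {y : EuclideanSpace ℝ (Fin N) | ρ ≤ ‖y‖} ∩ ball 0 (R/2),
        ENNReal.ofReal (‖y‖ ^ (-β)) ≤ ENNReal.ofReal J := by
      calc ∫⁻ y in {y : EuclideanSpace ℝ (Fin N) | ρ ≤ ‖y‖} ∩ ball 0 (R/2),
          ENNReal.ofReal (‖y‖ ^ (-β))
          ≤ ∫⁻ y in (ball (0 : EuclideanSpace ℝ (Fin N)) ρ)ᶜ,
              ENNReal.ofReal (‖y‖ ^ (-β)) := by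
            refine lintegral_mono_set ?_
            intro y hy
            simp only [mem_compl_iff, mem_ball, dist_zero_right, not_lt]
            exact hy.1
        _ ≤ ENNReal.ofReal ((2 ^ (N:ℝ) * vr N / (1 - 2 ^ ((N:ℝ) - β))) * ρ ^ ((N:ℝ) - β)) :=
            lint_compl N hN β ρ hβN hρ0
        _ = ENNReal.ofReal J := rfl
    have key := master N hN α β ρ c hα0 hαN hβ0 hab hρ hc f hf hf0 hdecay x hx J hJ0 hJ
    refine key.trans ?_
    rw [hQ, hP]
    have hmono : R^((N:ℝ)-α-β) ≤ R^(-α) :=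
      Real.rpow_le_rpow_of_exponent_le hR1.le (by linarith)
    have hRα : (0:ℝ) ≤ R^(-α) := Real.rpow_nonneg hR0.le _
    have h2α : (0:ℝ) < 2^α := Real.rpow_pos_of_pos two_pos _
    have h2q : (0:ℝ) < 2^(α+β-(N:ℝ)) := Real.rpow_pos_of_pos two_pos _
    calc M * (R^(-α) * 2^α) + c * J * (R^(-α) * 2^α)
          + DD * (R^((N:ℝ)-α-β) * 2^(α+β-(N:ℝ)))
        ≤ M * (R^(-α) * 2^α) + c * J * (R^(-α) * 2^α)
          + DD * (R^(-α) * 2^(α+β-(N:ℝ))) := by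
          have := mul_le_mul_of_nonneg_left hmono (mul_nonneg hDD0 h2q.le)
          nlinarith
      _ = T3 * R^(-α) := by rw [hT3def, hJdef]; ring
      _ ≤ CCC * R^(-α) := mul_le_mul_of_nonneg_right hT3C hRα
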